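/- Every non-minimal element of a well-founded distributive join-semilattice has a canonical decomposition: it can be written as a finite supremum of pairwise incomparable join-irreducible elements, and this representation is unique up to permutation of the components. -/

import Mathlib

open Finset

section Aux
variable {S : Type*} [SemilatticeSup S]

private lemma aux_isLUB_sup' (T : Finset S) (hT : T.Nonempty) :
    IsLUB (T : Set S) (T.sup' hT id) := by
  constructor
  · intro a ha
    exact le_sup' id (by exact_mod_cast ha)
  · intro y hy
    exact sup'_le _ _ fun a ha => hy (by exact_mod_cast ha)

private lemma aux_min_le
    (hdist : ∀ x y z : S, x ≤ y ⊔ z → ∃ y' z', y' ≤ y ∧ z' ≤ z ∧ x = y' ⊔ z')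
    {b : S} (hb : IsMin b) (c : S) : b ≤ c := by
  obtain ⟨y', z', hy, hz, he⟩ := hdist b b c le_sup_left
  have h1 : z' ≤ b := he ▸ le_sup_right
  exact (hb h1).trans hz

private lemma aux_irred_le_sup'
    (hdist : ∀ x y z : S, x ≤ y ⊔ z → ∃ y' z', y' ≤ y ∧ z' ≤ z ∧ x = y' ⊔ z')
    {a : S} (ha : SupIrred a) (T : Finset S) (hT : T.Nonempty)
    (hle : a ≤ T.sup' hT id) : ∃ b ∈ T, a ≤ b := by
  induction hT using Finset.Nonempty.cons_induction with
  | singleton c => exact ⟨c, by simp, by simpa using hle⟩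
  | cons c T hc hT ih =>
    rw [sup'_cons (H := hT)] at hle
    obtain ⟨y', z', hy, hz, he⟩ := hdist a c (T.sup' hT id) hle
    rcases ha.2 he.symm with h | h
    · exact ⟨c, by simp, h ▸ hy⟩
    · obtain ⟨b, hb, hab⟩ := ih (h ▸ hz)
      exact ⟨b, by simp [hb], hab⟩

private lemma aux_exists_max (U : Finset S) {a : S} (ha : a ∈ U) :
    ∃ b ∈ U, a ≤ b ∧ ∀ c ∈ U, ¬ b < c := by
  classical
  obtain ⟨b, hb, hmax⟩ := (U.filter (a ≤ ·)).exists_maximal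
    ⟨a, by simp [ha]⟩
  simp only [mem_filter] at hb
  refine ⟨b, hb.1, hb.2, fun c hc hbc => ?_⟩
  exact hbc.not_ge (hmax (by simp [hc, hb.2.trans hbc.le]) hbc.le)

end Aux

/-- Every non-minimal element of a well-founded distributive join-semilattice has a
canonical decomposition: it is the supremum of a (unique) finite nonempty set of
pairwise incomparable join-irreducible elements. -/
theorem stmt1 {S : Type*} [SemilatticeSup S]
    (hwf : WellFounded ((· < ·) : S → S → Prop))
    (hdist : ∀ x y z : S, x ≤ y ⊔ z → ∃ y' z', y' ≤ y ∧ z' ≤ z ∧ x = y' ⊔ z')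
    (x : S) (hx : ¬ IsMin x) :
    ∃! T : Finset S, T.Nonempty ∧ (∀ a ∈ T, SupIrred a) ∧
      (T : Set S).Pairwise (fun a b => ¬ a ≤ b ∧ ¬ b ≤ a) ∧ IsLUB (T : Set S) x := by
  classical
  set P : Finset S → S → Prop := fun T x => T.Nonempty ∧ (∀ a ∈ T, SupIrred a) ∧
      (T : Set S).Pairwise (fun a b => ¬ a ≤ b ∧ ¬ b ≤ a) ∧ IsLUB (T : Set S) x with hP
  -- Existence
  have exists_dec : ∀ x : S, ¬ IsMin x → ∃ T : Finset S, P T x := by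
    intro x
    induction x using hwf.induction with
    | _ x ih =>
      intro hx
      by_cases hirr : SupIrred x
      · refine ⟨{x}, singleton_nonempty x, by simpa using hirr, by simp, ?_⟩
        simpa using isLUB_singleton
      · rw [SupIrred] at hirr
        push_neg at hirr
        obtain ⟨b, c, hbc, hb, hc⟩ := hirr hx
        have hbx : b < x := lt_of_le_of_ne (hbc ▸ le_sup_left) hb
        have hcx : c < x := lt_of_le_of_ne (hbc ▸ le_sup_right) hc
        have hbm : ¬ IsMin b := fun h => hc (le_antisymm (hbc ▸ le_sup_right)
          (hbc ▸ sup_le (aux_min_le hdist h c) le_rfl))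
        have hcm : ¬ IsMin c := fun h => hb (le_antisymm (hbc ▸ le_sup_left)
          (hbc ▸ sup_le le_rfl (aux_min_le hdist h b)))
        obtain ⟨Tb, hTb, hTbirr, -, hTblub⟩ := ih b hbx hbm
        obtain ⟨Tc, hTc, hTcirr, -, hTclub⟩ := ih c hcx hcm
        set U := Tb ∪ Tc with hU
        have hUne : U.Nonempty := hTb.mono subset_union_left
        have hUsup : U.sup' hUne id = x := by
          have h1 : Tb.sup' hTb id = b := (aux_isLUB_sup' Tb hTb).unique hTblub
          have h2 : Tc.sup' hTc id = c := (aux_isLUB_sup' Tc hTc).unique hTclub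
          calc U.sup' hUne id = Tb.sup' hTb id ⊔ Tc.sup' hTc id := sup'_union hTb hTc id
            _ = x := by rw [h1, h2]; exact hbc
        have hUirr : ∀ a ∈ U, SupIrred a := by
          intro a haU
          rcases mem_union.1 haU with h | h
          · exact hTbirr a h
          · exact hTcirr a h
        set T := U.filter (fun a => ∀ c ∈ U, ¬ a < c) with hT
        have hTsubU : T ⊆ U := filter_subset _ _
        have hmem : ∀ a ∈ T, ∀ c ∈ U, ¬ a < c := fun a ha => (mem_filter.1 ha).2
        have hup : ∀ u ∈ U, ∃ m ∈ T, u ≤ m := by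
          intro u hu
          obtain ⟨m, hm, hum, hmax⟩ := aux_exists_max U hu
          exact ⟨m, mem_filter.2 ⟨hm, hmax⟩, hum⟩
        obtain ⟨m0, hm0, -⟩ := hup _ hUne.choose_spec
        refine ⟨T, ⟨m0, hm0⟩, fun a ha => hUirr a (hTsubU ha), ?_, ?_, ?_⟩
        · intro a ha b hb hab
          constructor
          · exact fun h => hmem a ha b (hTsubU hb) (lt_of_le_of_ne h hab)
          · exact fun h => hmem b hb a (hTsubU ha) (lt_of_le_of_ne h (Ne.symm hab))
        · intro a ha
          have : (a : S) ∈ U := hTsubU (by exact_mod_cast ha)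
          exact hUsup ▸ le_sup' id this
        · intro y hy
          rw [← hUsup]
          refine sup'_le _ _ fun u hu => ?_
          obtain ⟨m, hm, hum⟩ := hup u hu
          exact hum.trans (hy (by exact_mod_cast hm))
  obtain ⟨T, hT⟩ := exists_dec x hx
  refine ⟨T, hT, fun U hU => ?_⟩
  -- Uniqueness
  have key : ∀ T U : Finset S, P T x → P U x → T ⊆ U := by
    rintro T U ⟨hTne, hTirr, hTpw, hTlub⟩ ⟨hUne, hUirr, hUpw, hUlub⟩
    intro a haT
    have hax : a ≤ x := hTlub.1 (by exact_mod_cast haT)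
    obtain ⟨u, huU, hau⟩ := aux_irred_le_sup' hdist (hTirr a haT) U hUne
      (by rwa [← hUlub.unique (aux_isLUB_sup' U hUne)])
    obtain ⟨a', ha'T, hua'⟩ := aux_irred_le_sup' hdist (hUirr u huU) T hTne
      (by rw [← hTlub.unique (aux_isLUB_sup' T hTne)]; exact hUlub.1 (by exact_mod_cast huU))
    have haa' : a = a' := by
      by_contra hne
      exact (hTpw (by exact_mod_cast haT) (by exact_mod_cast ha'T) hne).1 (hau.trans hua')
    have : a = u := le_antisymm hau (haa' ▸ hua')
    exact this ▸ huU
  exact Finset.Subset.antisymm (key U T hU hT) (key T U hT hU)
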